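/- Let A = {0, a_1, …, a_{k-1}} be a finite subset of a real normed vector space V with |A| = k ≥ 2 and 0 ∈ A, such that the additive subgroup G(A) generated by A is a discrete subgroup of V (every bounded subset of V contains only finitely many elements of G(A)). Let K = conv(A). Then there exists a positive integer c = c(A) such that for every integer h ≥ ck, G(A) ∩ (c·(a_1 + ⋯ + a_{k-1}) + (h-ck)K) ⊆ hA, where hA denotes the h-fold sumset of A. -/

import Mathlib

open Pointwise

/-- The `h`-fold sumset `hA = {a₁ + ⋯ + a_h : aᵢ ∈ A}`. -/
def hsum {V : Type*} [AddCommMonoid V] (h : ℕ) (A : Set V) : Set V :=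
  {z | ∃ f : Fin h → V, (∀ i, f i ∈ A) ∧ z = ∑ i, f i}

section hsumLemmas
variable {V : Type*} [AddCommMonoid V] {A : Set V}

lemma zero_mem_hsum (h0 : (0:V) ∈ A) (n : ℕ) : (0:V) ∈ hsum n A :=
  ⟨fun _ => 0, fun _ => h0, by simp⟩

lemma add_mem_hsum {x y : V} {m n : ℕ} (hx : x ∈ hsum m A) (hy : y ∈ hsum n A) :
    x + y ∈ hsum (m + n) A := by
  obtain ⟨f, hf, rfl⟩ := hx
  obtain ⟨g, hg, rfl⟩ := hy
  refine ⟨Fin.append f g, fun i => ?_, by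
    rw [Fin.sum_univ_add]; simp [Fin.append_left, Fin.append_right]⟩
  induction i using Fin.addCases with
  | left i => simpa [Fin.append_left] using hf i
  | right i => simpa [Fin.append_right] using hg i

lemma nsmul_mem_hsum {a : V} (ha : a ∈ A) (n : ℕ) : n • a ∈ hsum n A :=
  ⟨fun _ => a, fun _ => ha, by simp⟩

lemma hsum_mono (h0 : (0:V) ∈ A) {m n : ℕ} (hmn : m ≤ n) {x : V} (hx : x ∈ hsum m A) :
    x ∈ hsum n A := by
  have := add_mem_hsum hx (zero_mem_hsum h0 (n - m))
  rwa [add_zero, Nat.add_sub_cancel' hmn] at this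

lemma sum_nsmul_mem_hsum (h0 : (0:V) ∈ A) (F : Finset V) (m : V → ℕ)
    (hF : ∀ a ∈ F, a ∈ A) {h : ℕ} (hle : ∑ a ∈ F, m a ≤ h) :
    ∑ a ∈ F, m a • a ∈ hsum h A := by
  refine hsum_mono h0 hle ?_
  clear hle
  induction F using Finset.cons_induction with
  | empty => simpa using zero_mem_hsum h0 0
  | cons a F haF ih =>
    rw [Finset.sum_cons, Finset.sum_cons]
    exact add_mem_hsum (nsmul_mem_hsum (hF a (Finset.mem_cons_self a F)) _)
      (ih fun b hb => hF b (Finset.mem_cons_of_mem hb))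

end hsumLemmas

/-- Khovanskii-type lemma: let `A = {0, a₁, …, a_{k-1}}` be a finite subset of a real
normed vector space with `|A| = k ≥ 2` and `0 ∈ A`, whose generated additive subgroup
`G(A)` is discrete (every bounded set contains only finitely many of its elements), and
let `K = conv(A)`.  Then there is a positive integer `c` such that for all `h ≥ ck`,
`G(A) ∩ (c(a₁ + ⋯ + a_{k-1}) + (h-ck)K) ⊆ hA`.  (Since `0 ∈ A`, the sum
`a₁ + ⋯ + a_{k-1}` is the sum of all elements of `A`.) -/
theorem khovanskii_lemma {V : Type*} [NormedAddCommGroup V] [NormedSpace ℝ V]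
    (A : Set V) (hA : A.Finite) (k : ℕ) (hk : A.ncard = k) (hk2 : 2 ≤ k)
    (h0A : (0 : V) ∈ A)
    (hdisc : ∀ B : Set V, Bornology.IsBounded B →
      (B ∩ (AddSubgroup.closure A : Set V)).Finite) :
    ∃ c : ℕ, 0 < c ∧ ∀ h : ℕ, c * k ≤ h →
      (AddSubgroup.closure A : Set V) ∩
        ({(c : ℝ) • ∑ a ∈ hA.toFinset, a} +
          (fun x => ((h - c * k : ℕ) : ℝ) • x) '' convexHull ℝ A)
        ⊆ hsum h A := by
  classical
  set F : Finset V := hA.toFinset with hFdef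
  have hAF : (F : Set V) = A := hA.coe_toFinset
  have h0F : (0:V) ∈ F := by rw [← Finset.mem_coe, hAF]; exact h0A
  have hcard : F.card = k := by rw [← hk, Set.ncard_eq_toFinset_card _ hA]
  -- every element of the closure is an integer combination over F
  have hrep : ∀ r : V, r ∈ AddSubgroup.closure A → ∃ n : V → ℤ, ∑ a ∈ F, n a • a = r := by
    intro r hr
    have h1 : r ∈ Submodule.span ℤ A := by
      rw [← Submodule.mem_toAddSubgroup, Submodule.span_int_eq_addSubgroupClosure]
      exact hr
    rw [← hAF] at h1
    obtain ⟨f, -, hf⟩ := Submodule.mem_span_finset.1 h1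
    exact ⟨f, hf⟩
  choose! nrep hnrep using hrep
  set M : ℝ := ∑ a ∈ F, ‖a‖ with hM
  have hRfin : (Metric.closedBall (0:V) M ∩ (AddSubgroup.closure A : Set V)).Finite :=
    hdisc _ Metric.isBounded_closedBall
  set c : ℕ := 1 + hRfin.toFinset.sup (fun r => ∑ a ∈ F, (nrep r a).natAbs) with hcdef
  have hc1 : 1 ≤ c := Nat.le_add_right 1 _
  refine ⟨c, hc1, ?_⟩
  intro h hch x hx
  obtain ⟨hxG, hx2⟩ := hx
  obtain ⟨p, hp, q, hq, hpq⟩ := Set.mem_add.1 hx2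
  rw [Set.mem_singleton_iff] at hp
  obtain ⟨z, hz, rfl⟩ := hq
  rw [← hAF, Finset.convexHull_eq] at hz
  obtain ⟨w, hw0, hw1, hcm⟩ := hz
  set H : ℕ := h - c * k with hHdef
  have hHk : c * k + H = h := Nat.add_sub_cancel' hch
  -- the real coefficients
  set μ : V → ℝ := fun a => (H:ℝ) * w a with hμdef
  have hμ0 : ∀ a ∈ F, 0 ≤ μ a := fun a ha => mul_nonneg (Nat.cast_nonneg H) (hw0 a ha)
  set m : V → ℕ := fun a => ⌊μ a⌋₊ with hmdef
  have hm_le : ∀ a ∈ F, (m a : ℝ) ≤ μ a := fun a ha => Nat.floor_le (hμ0 a ha)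
  have hfr1 : ∀ a ∈ F, μ a - m a ≤ 1 := by
    intro a ha
    have := Nat.lt_floor_add_one (μ a)
    simp only [hmdef]
    linarith
  -- x as a combination
  have hxq : x = (c:ℝ) • (∑ a ∈ F, a) + ∑ a ∈ F, μ a • a := by
    rw [← hpq, hp]
    congr 1
    rw [← hcm, Finset.centerMass_eq_of_sum_1 _ _ hw1]
    show (H:ℝ) • ∑ i ∈ F, w i • id i = _
    rw [Finset.smul_sum]
    exact Finset.sum_congr rfl fun a _ => by simp [hμdef, smul_smul]
  set r : V := x - c • (∑ a ∈ F, a) - ∑ a ∈ F, m a • a with hrdef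
  have hsF : ∀ a ∈ F, a ∈ AddSubgroup.closure A := fun a ha =>
    AddSubgroup.subset_closure (by rw [← hAF]; exact ha)
  have hrG : r ∈ AddSubgroup.closure A := by
    rw [hrdef]
    exact sub_mem (sub_mem hxG (nsmul_mem (sum_mem hsF) c))
      (sum_mem fun a ha => nsmul_mem (hsF a ha) _)
  have hreq : r = ∑ a ∈ F, (μ a - m a) • a := by
    have hms : (∑ a ∈ F, m a • a) = ∑ a ∈ F, ((m a : ℝ)) • a :=
      Finset.sum_congr rfl fun a _ => (Nat.cast_smul_eq_nsmul ℝ _ _).symm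
    have hsplit : ∑ a ∈ F, (μ a - (m a : ℝ)) • a
        = ∑ a ∈ F, μ a • a - ∑ a ∈ F, ((m a : ℝ)) • a := by
      rw [← Finset.sum_sub_distrib]
      exact Finset.sum_congr rfl fun a _ => sub_smul _ _ _
    rw [hrdef, hxq, ← Nat.cast_smul_eq_nsmul ℝ c, hms, hsplit]
    abel
  have hrB : ‖r‖ ≤ M := by
    rw [hreq]
    calc ‖∑ a ∈ F, (μ a - m a) • a‖ ≤ ∑ a ∈ F, ‖(μ a - m a) • a‖ := norm_sum_le _ _
      _ ≤ ∑ a ∈ F, ‖a‖ := by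
          refine Finset.sum_le_sum fun a ha => ?_
          rw [norm_smul, Real.norm_eq_abs,
            abs_of_nonneg (sub_nonneg.2 (hm_le a ha))]
          exact mul_le_of_le_one_left (norm_nonneg a) (hfr1 a ha)
  have hrR : r ∈ hRfin.toFinset := by
    rw [Set.Finite.mem_toFinset]
    exact ⟨Metric.mem_closedBall.2 (by simpa using hrB), hrG⟩
  have hnr : ∑ a ∈ F, nrep r a • a = r := hnrep r hrG
  have hnb : ∑ a ∈ F, (nrep r a).natAbs + 1 ≤ c := by
    have h2 : (∑ a ∈ F, (nrep r a).natAbs)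
        ≤ hRfin.toFinset.sup (fun r => ∑ a ∈ F, (nrep r a).natAbs) :=
      Finset.le_sup (f := fun r => ∑ a ∈ F, (nrep r a).natAbs) hrR
    omega
  set n : V → ℤ := nrep r with hndef
  set N : V → ℤ := fun a => (c:ℤ) + (m a : ℤ) + n a with hNdef
  have hNnn : ∀ a ∈ F, 0 ≤ N a := by
    intro a ha
    have h1 : (n a).natAbs ≤ ∑ b ∈ F, (n b).natAbs :=
      Finset.single_le_sum (f := fun b => (n b).natAbs) (fun _ _ => Nat.zero_le _) ha
    simp only [hNdef]
    omega
  have hxeq : x = ∑ a ∈ F, N a • a := by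
    have h2 : ∑ a ∈ F, N a • a = c • (∑ a ∈ F, a) + ∑ a ∈ F, m a • a + r := by
      rw [← hnr, Finset.smul_sum, ← Finset.sum_add_distrib, ← Finset.sum_add_distrib]
      refine Finset.sum_congr rfl fun a ha => ?_
      simp only [hNdef, add_smul, natCast_zsmul]
    rw [h2, hrdef]
    abel
  have hxeq' : x = ∑ a ∈ F.erase 0, N a • a := by
    rw [hxeq]
    exact (Finset.sum_erase (f := fun a => N a • a) F (by simp)).symm
  set Nn : V → ℕ := fun a => (N a).toNat with hNndef
  have hNcast : ∀ a ∈ F, (Nn a : ℤ) = N a := fun a ha => Int.toNat_of_nonneg (hNnn a ha)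
  have hxeq'' : x = ∑ a ∈ F.erase 0, Nn a • a := by
    rw [hxeq']
    refine Finset.sum_congr rfl fun a ha => ?_
    rw [← natCast_zsmul, hNcast a (Finset.mem_of_mem_erase ha)]
  -- count bound
  have hcount : ∑ a ∈ F.erase 0, Nn a ≤ h := by
    have hcard' : (F.erase 0).card = k - 1 := by rw [Finset.card_erase_of_mem h0F, hcard]
    have hm_sum : ∑ a ∈ F.erase 0, m a ≤ H := by
      have hle : (∑ a ∈ F.erase 0, (m a : ℝ)) ≤ ∑ a ∈ F, μ a := by
        calc (∑ a ∈ F.erase 0, (m a : ℝ)) ≤ ∑ a ∈ F.erase 0, μ a :=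
              Finset.sum_le_sum fun a ha => hm_le a (Finset.mem_of_mem_erase ha)
          _ ≤ ∑ a ∈ F, μ a :=
              Finset.sum_le_sum_of_subset_of_nonneg (Finset.erase_subset _ _)
                (fun a ha _ => hμ0 a ha)
      have hμsum : ∑ a ∈ F, μ a = (H:ℝ) := by
        simp only [hμdef, ← Finset.mul_sum, hw1, mul_one]
      rw [hμsum] at hle
      exact_mod_cast hle
    have hn_sum : (∑ a ∈ F.erase 0, n a) ≤ (c:ℤ) - 1 := by
      calc (∑ a ∈ F.erase 0, n a) ≤ ∑ a ∈ F.erase 0, ((n a).natAbs : ℤ) :=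
            Finset.sum_le_sum fun a _ => Int.le_natAbs
        _ ≤ ∑ a ∈ F, ((n a).natAbs : ℤ) := by
            exact_mod_cast Finset.sum_le_sum_of_subset (Finset.erase_subset (0:V) F)
              (f := fun a => (n a).natAbs)
        _ ≤ (c:ℤ) - 1 := by
            have : (∑ a ∈ F, ((n a).natAbs : ℤ)) = ((∑ a ∈ F, (n a).natAbs : ℕ) : ℤ) := by
              push_cast; ring
            rw [this]; omega
    have hNsum : (∑ a ∈ F.erase 0, (Nn a : ℤ))
        = (F.erase 0).card • (c:ℤ) + (∑ a ∈ F.erase 0, (m a:ℤ)) + ∑ a ∈ F.erase 0, n a := by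
      rw [Finset.sum_congr rfl (fun a ha => hNcast a (Finset.mem_of_mem_erase ha))]
      simp only [hNdef]
      rw [Finset.sum_add_distrib, Finset.sum_add_distrib, Finset.sum_const]
    have hcast : ((∑ a ∈ F.erase 0, Nn a : ℕ):ℤ) ≤ (h:ℤ) := by
      push_cast
      rw [hNsum, nsmul_eq_mul]
      have e1 : ((F.erase 0).card : ℤ) = (k:ℤ) - 1 := by rw [hcard']; push_cast; omega
      have e2 : (∑ a ∈ F.erase 0, (m a:ℤ)) ≤ (H:ℤ) := by exact_mod_cast hm_sum
      have e3 : (c:ℤ) * k + H = h := by exact_mod_cast hHk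
      rw [e1]
      have e4 : ((k:ℤ) - 1) * c = (c:ℤ) * k - c := by ring
      have hc1' : (1:ℤ) ≤ c := by exact_mod_cast hc1
      linarith
    exact_mod_cast hcast
  exact hxeq'' ▸ sum_nsmul_mem_hsum h0A (F.erase 0) Nn
    (fun a ha => by rw [← hAF]; exact Finset.mem_coe.2 (Finset.mem_of_mem_erase ha)) hcount
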